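/- Let X be a reflexive real Banach space and let A, B : X → ℝ be continuously Fréchet differentiable functionals satisfying: (1) A is sequentially weakly lower semicontinuous, and for every constant c, A(xₙ) → +∞ whenever (xₙ) is a sequence with B(xₙ) ≤ c for all n and ‖xₙ‖ → ∞; (2) B is sequentially weakly continuous (xₙ ⇀ x weakly implies B(xₙ) → B(x)), B(0) = 0, and B′(x) = 0 only at x = 0. Then for every R ≠ 0 in the range of B there exist x_R ∈ X and λ_R ∈ ℝ such that B(x_R) = R, A′(x_R) = λ_R · B′(x_R), and A(x_R) = inf{ A(y) : y ∈ X, B(y) = R }. -/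

import Mathlib

open Filter Topology

/-- Weak convergence of a sequence in a normed space: testing against all
continuous linear functionals. -/
def WeaklyConvergesTo {X : Type*} [NormedAddCommGroup X] [NormedSpace ℝ X]
    (x : ℕ → X) (x₀ : X) : Prop :=
  ∀ φ : StrongDual ℝ X, Tendsto (fun n => φ (x n)) atTop (𝓝 (φ x₀))


open NormedSpace TopologicalSpace

section Aux

/-- Separation of a point from a closed subspace by a functional vanishing on it. -/
lemma sep_from_closed_subspace {E : Type*} [NormedAddCommGroup E] [NormedSpace ℝ E]
    (p : Submodule ℝ E) (hp : IsClosed (p : Set E)) {x : E} (hx : x ∉ p) :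
    ∃ f : E →L[ℝ] ℝ, (∀ y ∈ p, f y = 0) ∧ f x = 1 := by
  obtain ⟨f, u, hfs, hux⟩ := geometric_hahn_banach_closed_point p.convex hp hx
  have hf0 : ∀ y ∈ p, f y = 0 := by
    intro y hy
    by_contra h
    have h1 : f (((u+1) / f y) • y) < u := hfs _ (p.smul_mem _ hy)
    rw [map_smul, smul_eq_mul, div_mul_cancel₀ _ h] at h1
    linarith
  have hfx : 0 < f x := by
    have h0 : f 0 < u := hfs 0 p.zero_mem
    rw [map_zero] at h0
    linarith
  refine ⟨(f x)⁻¹ • f, fun y hy => ?_, ?_⟩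
  · simp [hf0 y hy]
  · simp [inv_mul_cancel₀ hfx.ne']

/-- If the dual of a normed space is separable, so is the space. -/
lemma separable_of_dual_separable {E : Type*} [NormedAddCommGroup E] [NormedSpace ℝ E]
    [SeparableSpace (StrongDual ℝ E)] : SeparableSpace E := by
  obtain ⟨u, hu⟩ := exists_dense_seq (StrongDual ℝ E)
  -- choose near-norming vectors
  have hchoice : ∀ k : ℕ, ∃ v : E, ‖v‖ ≤ 1 ∧ ‖u k‖ / 2 ≤ ‖(u k) v‖ := by
    intro k
    rcases eq_or_ne (u k) 0 with h | h
    · exact ⟨0, by simp [h]⟩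
    · have : ‖u k‖ / 2 < ‖u k‖ := by
        have := norm_pos_iff.2 h
        linarith
      obtain ⟨v, hv1, hv2⟩ := (u k).exists_lt_apply_of_lt_opNorm this
      exact ⟨v, hv1.le, hv2.le⟩
  choose v hv1 hv2 using hchoice
  set p : Submodule ℝ E := Submodule.span ℝ (Set.range v) with hpdef
  have hdense : (p.topologicalClosure : Set E) = Set.univ := by
    by_contra h
    obtain ⟨x, hx⟩ : ∃ x : E, x ∉ p.topologicalClosure := by
      by_contra h2
      push_neg at h2
      exact h (Set.eq_univ_of_forall h2)
    obtain ⟨f, hf0, hfx⟩ := sep_from_closed_subspace p.topologicalClosure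
      p.isClosed_topologicalClosure hx
    have hfne : f ≠ 0 := by
      intro h0
      rw [h0] at hfx; simp at hfx
    have hfpos : (0:ℝ) < ‖f‖ := norm_pos_iff.2 hfne
    set g : StrongDual ℝ E := ‖f‖⁻¹ • f with hg
    have hgnorm : ‖g‖ = 1 := by
      rw [hg, norm_smul, norm_inv, norm_norm, inv_mul_cancel₀ hfpos.ne']
    have hg0 : ∀ y ∈ p.topologicalClosure, g y = 0 := by
      intro y hy; simp [hg, hf0 y hy]
    obtain ⟨k, hk⟩ := Metric.denseRange_iff.1 hu g (1/4) (by norm_num)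
    have hukn : (3:ℝ)/4 ≤ ‖u k‖ := by
      have h1 : ‖g - u k‖ < 1/4 := by
        rw [← dist_eq_norm]; exact hk
      have h2 := norm_sub_norm_le g (u k)
      rw [hgnorm] at h2
      linarith
    have hvk : (v k) ∈ p.topologicalClosure :=
      p.le_topologicalClosure (Submodule.subset_span ⟨k, rfl⟩)
    have h3 : ‖(u k) (v k)‖ ≤ 1/4 := by
      have : (u k) (v k) = (u k - g) (v k) := by
        simp [hg0 _ hvk]
      rw [this]
      calc ‖(u k - g) (v k)‖ ≤ ‖u k - g‖ * ‖v k‖ := (u k - g).le_opNorm _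
        _ ≤ ‖u k - g‖ * 1 := by
            have := (u k - g).opNorm_nonneg
            exact mul_le_mul_of_nonneg_left (hv1 k) this
        _ ≤ 1/4 := by
            rw [mul_one, ← dist_eq_norm, dist_comm]
            exact hk.le
    have h4 := hv2 k
    linarith
  have hsep : IsSeparable (Set.univ : Set E) := by
    rw [← hdense]
    have : IsSeparable (Set.range v) := (Set.countable_range v).isSeparable
    have h5 : IsSeparable (p : Set E) := this.span
    simpa [Submodule.topologicalClosure_coe] using h5.closure
  exact isSeparable_univ_iff.1 hsep

variable {X : Type*} [NormedAddCommGroup X] [NormedSpace ℝ X]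

/-- Restriction of functionals to a subspace, as a continuous linear map. -/
noncomputable def restrD (Y : Submodule ℝ X) : StrongDual ℝ X →L[ℝ] StrongDual ℝ ↥Y :=
  (ContinuousLinearMap.compL ℝ ↥Y X ℝ).flip Y.subtypeL

@[simp] lemma restrD_apply (Y : Submodule ℝ X) (f : StrongDual ℝ X) (y : ↥Y) :
    restrD Y f y = f ↑y := rfl

/-- A closed subspace of a reflexive space is reflexive: every element of its double dual
is represented by a vector. -/
lemma subspace_reflexive (hrefl : Function.Surjective (inclusionInDoubleDual ℝ X))
    (Y : Submodule ℝ X) (hY : IsClosed (Y : Set X)) (F : StrongDual ℝ (StrongDual ℝ ↥Y)) :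
    ∃ y : ↥Y, ∀ φ : StrongDual ℝ ↥Y, φ y = F φ := by
  obtain ⟨x, hx⟩ := hrefl (F.comp (restrD Y))
  have hxval : ∀ ψ : StrongDual ℝ X, ψ x = F (restrD Y ψ) := by
    intro ψ
    have := congrArg (fun T : StrongDual ℝ (StrongDual ℝ X) => T ψ) hx
    simpa using this
  have hxY : x ∈ Y := by
    by_contra hxn
    obtain ⟨ψ, hψ0, hψx⟩ := sep_from_closed_subspace Y hY hxn
    have h1 : restrD Y ψ = 0 := by
      ext z; simpa using hψ0 _ z.2
    have := hxval ψ
    rw [h1, hψx, map_zero] at this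
    exact one_ne_zero this
  refine ⟨⟨x, hxY⟩, fun φ => ?_⟩
  obtain ⟨g, hg, -⟩ := exists_extension_norm_eq Y φ
  have h2 : restrD Y g = φ := by
    ext z; simpa using hg z
  have h3 := hxval g
  rw [h2] at h3
  calc φ ⟨x, hxY⟩ = g x := (hg ⟨x, hxY⟩).symm
    _ = F φ := h3

set_option maxHeartbeats 1000000 in
/-- Weak sequential compactness of bounded sequences in a reflexive space. -/
lemma weak_seq_compact (hrefl : Function.Surjective (inclusionInDoubleDual ℝ X))
    (x : ℕ → X) (M : ℝ) (hM : ∀ n, ‖x n‖ ≤ M) :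
    ∃ (x₀ : X) (σ : ℕ → ℕ), StrictMono σ ∧ WeaklyConvergesTo (x ∘ σ) x₀ := by
  have hM0 : (0:ℝ) ≤ M := le_trans (norm_nonneg _) (hM 0)
  set Y : Submodule ℝ X := (Submodule.span ℝ (Set.range x)).topologicalClosure with hYdef
  have hYc : IsClosed (Y : Set X) := (Submodule.span ℝ (Set.range x)).isClosed_topologicalClosure
  have hmem : ∀ n, x n ∈ Y := fun n =>
    (Submodule.span ℝ (Set.range x)).le_topologicalClosure (Submodule.subset_span ⟨n, rfl⟩)
  set z : ℕ → ↥Y := fun n => ⟨x n, hmem n⟩ with hzdef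
  have hz : ∀ n, ‖z n‖ ≤ M := fun n => hM n
  haveI hYsep : SeparableSpace ↥Y := by
    have h1 : IsSeparable (Y : Set X) := by
      have h2 := (((Set.countable_range x).isSeparable).span
        (R := ℝ) (M := X)).closure
      simpa [hYdef, Submodule.topologicalClosure_coe] using h2
    exact h1.separableSpace
  have hYrefl : Function.Surjective (inclusionInDoubleDual ℝ ↥Y) := by
    intro F
    obtain ⟨y, hy⟩ := subspace_reflexive hrefl Y hYc F
    exact ⟨y, by ext φ; simpa using hy φ⟩
  haveI : SeparableSpace (StrongDual ℝ (StrongDual ℝ ↥Y)) :=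
    hYrefl.denseRange.separableSpace (inclusionInDoubleDual ℝ ↥Y).continuous
  haveI : SeparableSpace (StrongDual ℝ ↥Y) := separable_of_dual_separable (E := StrongDual ℝ ↥Y)
  obtain ⟨u, hu⟩ := exists_dense_seq (StrongDual ℝ ↥Y)
  -- diagonal subsequence via compactness of a countable product of intervals
  set g : ℕ → ℕ → ℝ := fun n k => u k (z n) with hgdef
  have hs : IsCompact (Set.pi Set.univ (fun k : ℕ => Set.Icc (-(‖u k‖*M)) (‖u k‖*M))) :=
    isCompact_univ_pi fun k => isCompact_Icc
  have hg : ∀ n, g n ∈ Set.pi Set.univ (fun k : ℕ => Set.Icc (-(‖u k‖*M)) (‖u k‖*M)) := by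
    intro n
    rw [Set.mem_univ_pi]
    intro k
    rw [Set.mem_Icc, ← abs_le]
    calc |u k (z n)| = ‖u k (z n)‖ := rfl
      _ ≤ ‖u k‖ * ‖z n‖ := (u k).le_opNorm _
      _ ≤ ‖u k‖ * M := mul_le_mul_of_nonneg_left (hz n) (norm_nonneg (u k))
  obtain ⟨a, -, σ, hσ, hconv⟩ := hs.tendsto_subseq hg
  have hcoord : ∀ k, Tendsto (fun i => u k (z (σ i))) atTop (𝓝 (a k)) := by
    intro k
    exact (tendsto_pi_nhds.1 hconv) k
  -- every functional's values along the subsequence form a Cauchy sequence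
  have hcauchy : ∀ ψ : StrongDual ℝ ↥Y, CauchySeq (fun i => ψ (z (σ i))) := by
    intro ψ
    rw [Metric.cauchySeq_iff]
    intro ε hε
    have hM1 : (0:ℝ) < M + 1 := by linarith
    obtain ⟨k, hk⟩ := Metric.denseRange_iff.1 hu ψ (ε/(3*(M+1)))
      (by positivity)
    have hck : CauchySeq (fun i => u k (z (σ i))) := (hcoord k).cauchySeq
    obtain ⟨N, hN⟩ := Metric.cauchySeq_iff.1 hck (ε/3) (by linarith)
    refine ⟨N, fun m hm n hn => ?_⟩
    have key : ∀ i, dist (ψ (z (σ i))) (u k (z (σ i))) ≤ ε/(3*(M+1)) * M := by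
      intro i
      rw [dist_eq_norm]
      calc ‖ψ (z (σ i)) - u k (z (σ i))‖ = ‖(ψ - u k) (z (σ i))‖ := by simp
        _ ≤ ‖ψ - u k‖ * ‖z (σ i)‖ := (ψ - u k).le_opNorm _
        _ ≤ ε/(3*(M+1)) * M := by
            apply mul_le_mul (le_of_lt ?_) (hz _) (norm_nonneg _) (by positivity)
            exact lt_of_eq_of_lt (dist_eq_norm ψ (u k)).symm hk
    have hlt : ε/(3*(M+1)) * M < ε/3 := by
      rw [div_mul_eq_mul_div, div_lt_div_iff₀ (by linarith) (by norm_num)]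
      ring_nf
      nlinarith
    calc dist (ψ (z (σ m))) (ψ (z (σ n)))
        ≤ dist (ψ (z (σ m))) (u k (z (σ m))) + dist (u k (z (σ m))) (u k (z (σ n)))
          + dist (u k (z (σ n))) (ψ (z (σ n))) := dist_triangle4 _ _ _ _
      _ < ε/3 + ε/3 + ε/3 := by
          have h1 := key m
          have h2 := hN m hm n hn
          have h3 := key n
          rw [dist_comm] at h3
          linarith
      _ = ε := by ring
  have hlim : ∀ ψ : StrongDual ℝ ↥Y, ∃ L, Tendsto (fun i => ψ (z (σ i))) atTop (𝓝 L) :=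
    fun ψ => cauchySeq_tendsto_of_complete (hcauchy ψ)
  set L : StrongDual ℝ ↥Y → ℝ := fun ψ => (hlim ψ).choose with hLdef
  have hL : ∀ ψ, Tendsto (fun i => ψ (z (σ i))) atTop (𝓝 (L ψ)) := fun ψ => (hlim ψ).choose_spec
  have hadd : ∀ ψ χ : StrongDual ℝ ↥Y, L (ψ + χ) = L ψ + L χ := by
    intro ψ χ
    refine tendsto_nhds_unique (hL (ψ + χ)) ?_
    simpa using (hL ψ).add (hL χ)
  have hsmul : ∀ (c : ℝ) (ψ : StrongDual ℝ ↥Y), L (c • ψ) = c * L ψ := by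
    intro c ψ
    refine tendsto_nhds_unique (hL (c • ψ)) ?_
    simpa using (hL ψ).const_mul c
  have hbound : ∀ ψ : StrongDual ℝ ↥Y, ‖L ψ‖ ≤ M * ‖ψ‖ := by
    intro ψ
    refine le_of_tendsto (hL ψ).norm (Filter.Eventually.of_forall fun i => ?_)
    calc ‖ψ (z (σ i))‖ ≤ ‖ψ‖ * ‖z (σ i)‖ := ψ.le_opNorm _
      _ ≤ ‖ψ‖ * M := mul_le_mul_of_nonneg_left (hz _) (norm_nonneg ψ)
      _ = M * ‖ψ‖ := mul_comm _ _
  set F : StrongDual ℝ (StrongDual ℝ ↥Y) :=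
    LinearMap.mkContinuous (𝕜 := ℝ) (E := StrongDual ℝ ↥Y) (F := ℝ)
      { toFun := L
        map_add' := hadd
        map_smul' := hsmul } M hbound with hFdef
  obtain ⟨y₀, hy₀⟩ := subspace_reflexive hrefl Y hYc F
  refine ⟨↑y₀, σ, hσ, ?_⟩
  intro ψX
  have h1 : Tendsto (fun i => (restrD Y ψX) (z (σ i))) atTop (𝓝 (L (restrD Y ψX))) :=
    hL (restrD Y ψX)
  have h2 : L (restrD Y ψX) = ψX ↑y₀ := by
    have h3 : (restrD Y ψX) y₀ = F (restrD Y ψX) := hy₀ (restrD Y ψX)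
    have h4 : F (restrD Y ψX) = L (restrD Y ψX) := rfl
    rw [h4] at h3
    rw [← h3]
    simp
  rw [h2] at h1
  exact h1

lemma bounded_of_sublevel (A B : X → ℝ)
    (hAcoer : ∀ c : ℝ, ∀ x : ℕ → X, (∀ n, B (x n) ≤ c) →
      Tendsto (fun n => ‖x n‖) atTop atTop →
      Tendsto (fun n => A (x n)) atTop atTop)
    (c K : ℝ) (y : ℕ → X) (hBy : ∀ n, B (y n) ≤ c) (hAy : ∀ n, A (y n) ≤ K) :
    ∃ M, ∀ n, ‖y n‖ ≤ M := by
  by_contra h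
  push_neg at h
  choose n hn using h
  set w : ℕ → X := fun k => y (n (k : ℝ)) with hwdef
  have h1 : Tendsto (fun k : ℕ => ‖w k‖) atTop atTop :=
    tendsto_atTop_mono (fun k => (hn (k : ℝ)).le) tendsto_natCast_atTop_atTop
  have h2 := hAcoer c w (fun k => hBy _) h1
  obtain ⟨k, hk⟩ := (h2.eventually_gt_atTop K).exists
  exact absurd (hAy _) (not_le.2 hk)


end Aux

set_option maxHeartbeats 1000000

/-- Berger's theorem on the nonlinear eigenvalue problem `A′(x) = λ B′(x)`
in a reflexive Banach space. -/
theorem stmt_11 {X : Type*} [NormedAddCommGroup X] [NormedSpace ℝ X]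
    [CompleteSpace X]
    (hrefl : Function.Surjective (NormedSpace.inclusionInDoubleDual ℝ X))
    (A B : X → ℝ) (hA : ContDiff ℝ 1 A) (hB : ContDiff ℝ 1 B)
    -- (1) A is sequentially weakly lower semicontinuous ...
    (hAwlsc : ∀ (x : ℕ → X) (x₀ : X), WeaklyConvergesTo x x₀ →
      A x₀ ≤ liminf (fun n => A (x n)) atTop)
    -- ... and coercive on the sublevel sets of B
    (hAcoer : ∀ c : ℝ, ∀ x : ℕ → X, (∀ n, B (x n) ≤ c) →
      Tendsto (fun n => ‖x n‖) atTop atTop →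
      Tendsto (fun n => A (x n)) atTop atTop)
    -- (2) B is sequentially weakly continuous, B 0 = 0, and B′(x) = 0 only at x = 0
    (hBwc : ∀ (x : ℕ → X) (x₀ : X), WeaklyConvergesTo x x₀ →
      Tendsto (fun n => B (x n)) atTop (𝓝 (B x₀)))
    (hB0 : B 0 = 0)
    (hB' : ∀ x : X, fderiv ℝ B x = 0 → x = 0) :
    ∀ R : ℝ, R ≠ 0 → (∃ y, B y = R) →
      ∃ (xR : X) (lR : ℝ), B xR = R ∧ fderiv ℝ A xR = lR • fderiv ℝ B xR ∧
        A xR = sInf {a : ℝ | ∃ y, B y = R ∧ a = A y} := by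
  classical
  intro R hR hex
  obtain ⟨y₀, hy₀⟩ := hex
  set S : Set ℝ := {a : ℝ | ∃ y, B y = R ∧ a = A y} with hSdef
  have hSne : S.Nonempty := ⟨A y₀, y₀, hy₀, rfl⟩
  have hcont : Continuous A := hA.continuous
  -- Step B : S is bounded below
  have hSbdd : BddBelow S := by
    by_contra hnb
    rw [not_bddBelow_iff] at hnb
    have hseq : ∀ nn : ℕ, ∃ y, B y = R ∧ A y < -(nn : ℝ) := by
      intro nn
      obtain ⟨aa, haS, ha⟩ := hnb (-(nn : ℝ))
      obtain ⟨y, hy1, rfl⟩ := haS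
      exact ⟨y, hy1, ha⟩
    choose y hy1 hy2 using hseq
    obtain ⟨M, hM⟩ := bounded_of_sublevel A B hAcoer R 0 y (fun nn => (hy1 nn).le)
      (fun nn => ((hy2 nn).le.trans (neg_nonpos.2 (Nat.cast_nonneg nn))))
    obtain ⟨x₀, σ, hσ, hw⟩ := weak_seq_compact hrefl y M hM
    set a : ℝ := A x₀ with hadef
    have hIVT : ∀ k, A (y (σ k)) < a - 1 →
        ∃ t ∈ Set.Icc (0:ℝ) 1, A (x₀ + t • (y (σ k) - x₀)) = a - 1 := by
      intro k hk
      have hc : ContinuousOn (fun t : ℝ => A (x₀ + t • (y (σ k) - x₀))) (Set.Icc 0 1) :=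
        (hcont.comp (by continuity)).continuousOn
      have himg := intermediate_value_Icc' (by norm_num : (0:ℝ) ≤ 1) hc
      have hmem : a - 1 ∈ Set.Icc (A (x₀ + (1:ℝ) • (y (σ k) - x₀)))
          (A (x₀ + (0:ℝ) • (y (σ k) - x₀))) := by
        constructor
        · simp only [one_smul]
          have : x₀ + (y (σ k) - x₀) = y (σ k) := by abel
          rw [this]
          exact hk.le
        · simp only [zero_smul, add_zero]
          linarith
      obtain ⟨t, ht, hteq⟩ := himg hmem
      exact ⟨t, ht, hteq⟩
    set w : ℕ → X := fun k =>
      if h : A (y (σ k)) < a - 1 then x₀ + (hIVT k h).choose • (y (σ k) - x₀) else x₀ with hwdef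
    have hwA : ∀ k, A (y (σ k)) < a - 1 → A (w k) = a - 1 := by
      intro k h
      simp only [hwdef, dif_pos h]
      exact (hIVT k h).choose_spec.2
    have hwweak : WeaklyConvergesTo w x₀ := by
      intro φ
      have hb : ∀ k, dist (φ (w k)) (φ x₀) ≤ dist (φ (y (σ k))) (φ x₀) := by
        intro k
        by_cases h : A (y (σ k)) < a - 1
        · simp only [hwdef, dif_pos h]
          obtain ⟨ht0, ht1⟩ := (hIVT k h).choose_spec.1
          set t := (hIVT k h).choose
          rw [dist_eq_norm, dist_eq_norm]
          have heq : φ (x₀ + t • (y (σ k) - x₀)) - φ x₀ = t • (φ (y (σ k)) - φ x₀) := by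
            simp only [map_add, map_smul, map_sub, smul_eq_mul]
            ring
          rw [heq, norm_smul]
          have : ‖t‖ ≤ 1 := by rw [Real.norm_eq_abs, abs_of_nonneg ht0]; exact ht1
          calc ‖t‖ * ‖φ (y (σ k)) - φ x₀‖ ≤ 1 * ‖φ (y (σ k)) - φ x₀‖ :=
                mul_le_mul_of_nonneg_right this (norm_nonneg _)
            _ = ‖φ (y (σ k)) - φ x₀‖ := one_mul _
        · simp only [hwdef, dif_neg h, dist_self]
          exact dist_nonneg
      have hφ := hw φ
      rw [tendsto_iff_dist_tendsto_zero]
      exact squeeze_zero (fun k => dist_nonneg) hb (tendsto_iff_dist_tendsto_zero.1 hφ)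
    have hev : ∀ᶠ k in atTop, A (w k) = a - 1 := by
      obtain ⟨N, hN⟩ := exists_nat_gt (1 - a)
      filter_upwards [eventually_ge_atTop N] with k hk
      apply hwA
      have h1 : A (y (σ k)) < -(σ k : ℝ) := hy2 (σ k)
      have h2 : (k : ℝ) ≤ (σ k : ℝ) := by exact_mod_cast hσ.le_apply
      have h3 : (N : ℝ) ≤ (k : ℝ) := by exact_mod_cast hk
      linarith
    have hliminf : liminf (fun k => A (w k)) atTop = a - 1 := by
      rw [liminf_congr hev]
      exact liminf_const _
    have hfin := hAwlsc w x₀ hwweak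
    rw [hliminf] at hfin
    have : a ≤ a - 1 := hfin
    linarith
  -- Step C : minimizing sequence
  set m : ℝ := sInf S with hmdef
  have hming : ∀ nn : ℕ, ∃ y, B y = R ∧ A y < m + 1/((nn:ℝ)+1) := by
    intro nn
    have hpos : (0:ℝ) < 1/((nn:ℝ)+1) := by positivity
    have hlt : m < m + 1/((nn:ℝ)+1) := by linarith
    obtain ⟨aa, haS, halt⟩ := exists_lt_of_csInf_lt hSne hlt
    obtain ⟨y, hyy1, rfl⟩ := haS
    exact ⟨y, hyy1, halt⟩
  choose y hy1 hy2 using hming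
  have hylb : ∀ nn, m ≤ A (y nn) := fun nn => csInf_le hSbdd ⟨y nn, hy1 nn, rfl⟩
  obtain ⟨M, hM⟩ := bounded_of_sublevel A B hAcoer R (m+1) y (fun nn => (hy1 nn).le)
    (fun nn => by
      have h1 := hy2 nn
      have h2 : 1/((nn:ℝ)+1) ≤ 1 := by
        rw [div_le_one (by positivity)]
        have h7 : (0:ℝ) ≤ (nn:ℝ) := Nat.cast_nonneg nn
        linarith
      linarith)
  obtain ⟨xR, σ, hσ, hwk⟩ := weak_seq_compact hrefl y M hM
  have hBxR : B xR = R := by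
    have h := hBwc (y ∘ σ) xR hwk
    rw [show (fun n => B ((y ∘ σ) n)) = fun _ => R from funext fun n => hy1 (σ n)] at h
    exact tendsto_nhds_unique h tendsto_const_nhds
  have hAt : Tendsto (fun k => A ((y ∘ σ) k)) atTop (𝓝 m) := by
    have hub : ∀ k, A ((y ∘ σ) k) ≤ m + 1/((k:ℝ)+1) := by
      intro k
      have h1 := (hy2 (σ k)).le
      have h2 : 1/((σ k:ℝ)+1) ≤ 1/((k:ℝ)+1) := by
        apply one_div_le_one_div_of_le (by positivity)
        have : (k:ℝ) ≤ (σ k:ℝ) := by exact_mod_cast hσ.le_apply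
        linarith
      calc A ((y ∘ σ) k) ≤ m + 1/((σ k:ℝ)+1) := h1
        _ ≤ m + 1/((k:ℝ)+1) := by linarith
    have hupper : Tendsto (fun k : ℕ => m + 1/((k:ℝ)+1)) atTop (𝓝 m) := by
      have h0 : Tendsto (fun k : ℕ => 1/((k:ℝ)+1)) atTop (𝓝 0) :=
        tendsto_one_div_add_atTop_nhds_zero_nat
      simpa using h0.const_add m
    exact tendsto_of_tendsto_of_tendsto_of_le_of_le tendsto_const_nhds hupper
      (fun k => hylb (σ k)) hub
  have hAle : A xR ≤ m := by
    have h := hAwlsc (y ∘ σ) xR hwk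
    rwa [hAt.liminf_eq] at h
  have hAge : m ≤ A xR := csInf_le hSbdd ⟨xR, hBxR, rfl⟩
  have hAm : A xR = m := le_antisymm hAle hAge
  -- Step D : Lagrange multipliers
  have hmin : IsLocalExtrOn A {p | B p = B xR} xR := by
    left
    apply IsMinOn.localize
    intro p hp
    have hpS : A p ∈ S := ⟨p, by rw [← hBxR]; exact hp, rfl⟩
    have : m ≤ A p := csInf_le hSbdd hpS
    simpa [hAm] using this
  obtain ⟨aa, bb, hab, heq⟩ := hmin.exists_multipliers_of_hasStrictFDerivAt_1d
    (hB.hasStrictFDerivAt one_ne_zero) (hA.hasStrictFDerivAt one_ne_zero)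
  have hbb : bb ≠ 0 := by
    intro h0
    rw [h0] at heq hab
    have haa : aa ≠ 0 := by
      intro h1
      rw [h1] at hab
      exact hab rfl
    have hBz : fderiv ℝ B xR = 0 := by
      have h2 : aa • fderiv ℝ B xR = 0 := by
        have h5 := heq
        rwa [zero_smul, add_zero] at h5
      have h6 := congrArg (fun T : X →L[ℝ] ℝ => aa⁻¹ • T) h2
      simpa [smul_smul, inv_mul_cancel₀ haa] using h6
    have hxz : xR = 0 := hB' xR hBz
    rw [hxz, hB0] at hBxR
    exact hR hBxR.symm
  refine ⟨xR, -aa / bb, hBxR, ?_, hAm⟩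
  have h3 : bb • fderiv ℝ A xR = -(aa • fderiv ℝ B xR) := by
    rw [eq_neg_iff_add_eq_zero, add_comm]
    exact heq
  have h4 : fderiv ℝ A xR = bb⁻¹ • (bb • fderiv ℝ A xR) := by
    rw [smul_smul, inv_mul_cancel₀ hbb, one_smul]
  rw [h4, h3, smul_neg, smul_smul]
  rw [show bb⁻¹ * aa = -(-aa/bb) by field_simp]
  rw [neg_smul, neg_neg]
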